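/- Let $\sigma=(a_1,\dots,a_s)$ be an $r$-good partition of $r$ with associated $a, b$ (with $a+b=r$, $\gcd(a,r)=\gcd(b,r)=1$) and $L=\mathrm{lcm}(a,b)$. If $r \mid n$ and $q \ge (L-1)(r-1)$, then $H = H(n,r,q \mid \sigma)$ has a perfect matching, i.e. $\nu(H) = \frac{nq}{r}$. -/

import Mathlib

/-- `K` is an edge of the σ-hypergraph `H(n,r,q | σ)` (with σ given by `a : Fin s → ℕ`). -/
def isEdge {n q s : ℕ} (a : Fin s → ℕ) (K : Finset (Fin n × Fin q)) : Prop :=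
  Multiset.filter (fun x => x ≠ 0)
      (Multiset.map (fun i => (K.filter (fun v => v.1 = i)).card)
        (Finset.univ : Finset (Fin n)).val)
    = Multiset.map a (Finset.univ : Finset (Fin s)).val

/-- `M` is a matching: a collection of pairwise disjoint edges. -/
def isMatching {n q s : ℕ} (a : Fin s → ℕ) (M : Finset (Finset (Fin n × Fin q))) : Prop :=
  (∀ E ∈ M, isEdge a E) ∧ ∀ E ∈ M, ∀ F ∈ M, E ≠ F → Disjoint E F



lemma pm_mod1 (a v j : ℕ) (hj : j < a) : ((v + j) % a + a - v % a) % a = j := by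
  have h1 : v % a + a * (v / a) = v := Nat.mod_add_div v a
  have h2 : (v + j) % a + a * ((v + j) / a) = v + j := Nat.mod_add_div (v + j) a
  have hd : (v + j) / a ≤ v / a + 1 := by
    calc (v + j) / a ≤ (v + a) / a := Nat.div_le_div_right (by omega)
    _ = v / a + 1 := by rw [Nat.add_div_right _ (by omega)]
  have hva : v % a < a := Nat.mod_lt _ (by omega)
  have hmul : a * ((v + j) / a) ≤ a * (v / a) + a := by
    have := Nat.mul_le_mul_left a hd
    rw [Nat.mul_add, Nat.mul_one] at this
    exact this
  have key : (v + j) % a + a - v % a = j + a * (v / a + 1 - (v + j) / a) := by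
    rw [Nat.mul_sub, Nat.mul_add, Nat.mul_one]
    omega
  rw [key, Nat.add_mul_mod_self_left, Nat.mod_eq_of_lt hj]

lemma pm_mod2 (a v w : ℕ) (hw : w < a) : (v + (w + a - v % a) % a) % a = w := by
  have hva : v % a < a := Nat.mod_lt _ (by omega)
  have h3 : (w + a - v % a) % a + a * ((w + a - v % a) / a) = w + a - v % a :=
    Nat.mod_add_div _ a
  have h1 : v % a + a * (v / a) = v := Nat.mod_add_div v a
  have hd : (w + a - v % a) / a ≤ 1 := by
    have : w + a - v % a < a * 2 := by omega
    have := Nat.div_lt_of_lt_mul this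
    omega
  have hmul : a * ((w + a - v % a) / a) ≤ a := by
    have := Nat.mul_le_mul_left a hd
    rw [Nat.mul_one] at this
    exact this
  have key : v + (w + a - v % a) % a = w + a * (v / a + 1 - (w + a - v % a) / a) := by
    rw [Nat.mul_sub, Nat.mul_add, Nat.mul_one]
    omega
  rw [key, Nat.add_mul_mod_self_left, Nat.mod_eq_of_lt hw]

lemma pm_mod3 (a w ρ : ℕ) (hρ : ρ < a) : (w + a - (w + a - ρ) % a) % a = ρ := by
  have h0 : 0 < a := by omega
  have h1 : (w + a - ρ) % a + a * ((w + a - ρ) / a) = w + a - ρ := Nat.mod_add_div _ a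
  have hlt : (w + a - ρ) % a < a := Nat.mod_lt _ h0
  have key : w + a - (w + a - ρ) % a = ρ + a * ((w + a - ρ) / a) := by omega
  rw [key, Nat.add_mul_mod_self_left, Nat.mod_eq_of_lt hρ]

lemma pm_sumcyc (d m : ℕ) (f : ℕ → ℕ) :
    ∑ l ∈ Finset.range (m * d), f (l % d) = m * ∑ j ∈ Finset.range d, f j := by
  induction m with
  | zero => simp
  | succ m ih =>
      have h : (m + 1) * d = m * d + d := by ring
      rw [h, Finset.sum_range_add, ih]
      have h2 : ∀ i ∈ Finset.range d, f ((m * d + i) % d) = f i := by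
        intro i hi
        rw [Finset.mem_range] at hi
        have : m * d + i = i + m * d := by ring
        rw [this, Nat.add_mul_mod_self_right, Nat.mod_eq_of_lt hi]
      rw [Finset.sum_congr rfl h2]
      ring

lemma pm_sumbij (a w : ℕ) (F : ℕ → ℕ) :
    ∑ ρ ∈ Finset.range a, F ((w + a - ρ) % a) = ∑ j ∈ Finset.range a, F j := by
  rcases Nat.eq_zero_or_pos a with h | h
  · simp [h]
  refine Finset.sum_nbij' (fun ρ => (w + a - ρ) % a) (fun j => (w + a - j) % a) ?_ ?_ ?_ ?_ ?_
  · intro ρ _; exact Finset.mem_range.2 (Nat.mod_lt _ h)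
  · intro j _; exact Finset.mem_range.2 (Nat.mod_lt _ h)
  · intro ρ hρ; exact pm_mod3 a w ρ (Finset.mem_range.1 hρ)
  · intro j hj; exact pm_mod3 a w j (Finset.mem_range.1 hj)
  · intro ρ _; rfl

lemma pm_sumtrunc (k a : ℕ) (hk : k ≤ a) (f : ℕ → ℕ) :
    ∑ j ∈ Finset.range a, (if j < k then f j else 0) = ∑ j ∈ Finset.range k, f j := by
  rw [← Finset.sum_filter]
  congr 1
  ext j
  simp only [Finset.mem_filter, Finset.mem_range]
  omega

lemma pm_groupsum (B K g : ℕ) (hg : g < K) (f : ℕ → ℕ) :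
    ∑ e ∈ Finset.range (K * B), (if e / B = g then f (e % B) else 0)
      = ∑ l ∈ Finset.range B, f l := by
  rcases Nat.eq_zero_or_pos B with hB | hB
  · simp [hB]
  induction K with
  | zero => omega
  | succ K ih =>
      have hKB : (K + 1) * B = K * B + B := by ring
      rw [hKB, Finset.sum_range_add]
      have hdiv : ∀ i, i < B → (K * B + i) / B = K := by
        intro i hi
        rw [show K * B + i = B * K + i by ring, Nat.mul_add_div hB]
        simp [Nat.div_eq_of_lt hi]
      have hmod : ∀ i, i < B → (K * B + i) % B = i := by
        intro i hi
        have : K * B + i = i + K * B := by ring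
        rw [this, Nat.add_mul_mod_self_right, Nat.mod_eq_of_lt hi]
      rcases Nat.lt_or_ge g K with hgK | hgK
      · rw [ih hgK]
        have h2 : ∀ i ∈ Finset.range B, (if (K * B + i) / B = g then f ((K * B + i) % B) else 0) = 0 := by
          intro i hi
          rw [Finset.mem_range] at hi
          rw [hdiv i hi, if_neg (by omega)]
        rw [Finset.sum_congr rfl h2]
        simp
      · have hgeq : g = K := by omega
        have h1 : ∑ e ∈ Finset.range (K * B), (if e / B = g then f (e % B) else 0) = 0 := by
          apply Finset.sum_eq_zero
          intro e he
          rw [Finset.mem_range] at he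
          have : e / B < K := Nat.div_lt_of_lt_mul (by rw [Nat.mul_comm]; exact he)
          rw [if_neg (by omega)]
        rw [h1]
        have h2 : ∀ i ∈ Finset.range B, (if (K * B + i) / B = g then f ((K * B + i) % B) else 0) = f i := by
          intro i hi
          rw [Finset.mem_range] at hi
          rw [hdiv i hi, hmod i hi, if_pos (by omega)]
        rw [Finset.sum_congr rfl h2]
        simp

lemma pm_sumshift (m k w : ℕ) (hk : k ≤ m) (f : ℕ → ℕ) :
    ∑ ρ ∈ Finset.range m, (if (w + m - ρ) % m < k then f ((w + m - ρ) % m) else 0)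
      = ∑ j ∈ Finset.range k, f j := by
  have h1 := pm_sumbij m w (fun j => if j < k then f j else 0)
  exact h1.trans (pm_sumtrunc k m hk f)

/-- existence of the interval containing ρ -/
lemma pm_interval_ex (f : ℕ → ℕ) (N ρ : ℕ) (h : ρ < ∑ e ∈ Finset.range N, f e) :
    ∃ e, e < N ∧ (∑ e' ∈ Finset.range e, f e') ≤ ρ ∧
      ρ < (∑ e' ∈ Finset.range e, f e') + f e := by
  induction N with
  | zero => simp at h
  | succ N ih =>
      rcases Nat.lt_or_ge ρ (∑ e ∈ Finset.range N, f e) with h1 | h1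
      · obtain ⟨e, he, h2, h3⟩ := ih h1
        exact ⟨e, by omega, h2, h3⟩
      · refine ⟨N, by omega, h1, ?_⟩
        rw [Finset.sum_range_succ] at h
        omega

lemma pm_off_mono (f : ℕ → ℕ) (e e' : ℕ) (h : e < e') :
    (∑ e'' ∈ Finset.range e, f e'') + f e ≤ ∑ e'' ∈ Finset.range e', f e'' := by
  rw [← Finset.sum_range_succ]
  exact Finset.sum_le_sum_of_subset (Finset.range_subset_range.2 h)

/-- the key multiset lemma -/
lemma pm_key {n q s : ℕ} (σ : Fin s → ℕ) (hpos : ∀ i, 1 ≤ σ i)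
    (K : Finset (Fin n × Fin q)) (c : Fin s → Fin n) (hc : Function.Injective c)
    (hcount : ∀ j, (K.filter (fun v => v.1 = c j)).card = σ j)
    (hzero : ∀ i : Fin n, (∀ j, i ≠ c j) → (K.filter (fun v => v.1 = i)).card = 0) :
    isEdge σ K := by
  unfold isEdge
  set cnt : Fin n → ℕ := fun i => (K.filter (fun v => v.1 = i)).card with hcnt
  have hfil : (Finset.univ : Finset (Fin n)).filter (fun i => cnt i ≠ 0)
      = Finset.univ.map ⟨c, hc⟩ := by
    ext i
    simp only [Finset.mem_filter, Finset.mem_univ, true_and, Finset.mem_map,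
      Function.Embedding.coeFn_mk]
    constructor
    · intro hne
      by_contra hcon
      push_neg at hcon
      exact hne (hzero i (fun j => fun he => hcon j (he.symm)))
    · rintro ⟨j, _, rfl⟩
      rw [hcnt]
      simp only []
      rw [hcount j]
      have := hpos j
      omega
  have hsplit : Multiset.filter (fun x => x ≠ 0) (Multiset.map cnt Finset.univ.val)
      = Multiset.map cnt ((Finset.univ.filter (fun i => cnt i ≠ 0)).val) := by
    rw [Finset.filter_val, Multiset.filter_map]
    rfl
  rw [hsplit, hfil]
  have : (Finset.univ.map ⟨c, hc⟩).val = Multiset.map c Finset.univ.val := by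
    simp [Finset.map_val]
  rw [this, Multiset.map_map]
  apply Multiset.map_congr rfl
  intro j _
  exact hcount j

/-- an edge has r vertices -/
lemma pm_card {n q r s : ℕ} (σ : Fin s → ℕ) (hsum : ∑ i, σ i = r)
    (K : Finset (Fin n × Fin q)) (hE : isEdge σ K) : K.card = r := by
  have h1 : K.card = ∑ i : Fin n, (K.filter (fun v => v.1 = i)).card :=
    Finset.card_eq_sum_card_fiberwise (fun x _ => Finset.mem_univ x.1)
  set cnt : Fin n → ℕ := fun i => (K.filter (fun v => v.1 = i)).card with hcnt
  have h2 : ∑ i : Fin n, cnt i = (Multiset.map cnt Finset.univ.val).sum := by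
    rfl
  unfold isEdge at hE
  have h3 : (Multiset.map cnt Finset.univ.val).sum
      = (Multiset.filter (fun x => x ≠ 0) (Multiset.map cnt Finset.univ.val)).sum
        + (Multiset.filter (fun x => ¬ x ≠ 0) (Multiset.map cnt Finset.univ.val)).sum := by
    rw [← Multiset.sum_add, Multiset.filter_add_not]
  have h4 : (Multiset.filter (fun x => ¬ x ≠ 0) (Multiset.map cnt Finset.univ.val)).sum = 0 := by
    apply Multiset.sum_eq_zero
    intro x hx
    rw [Multiset.mem_filter] at hx
    simpa using hx.2
  have h5 : (Multiset.map σ (Finset.univ : Finset (Fin s)).val).sum = r := by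
    rw [← hsum]
    rfl
  rw [h1, h2, h3, hE, h4, h5]
  omega

theorem pm_gen (n q r s : ℕ) (σ : Fin s → ℕ) (hpos : ∀ i, 1 ≤ σ i) (hsum : ∑ i, σ i = r)
    (N : ℕ) (D : ℕ → ℕ → ℕ)
    (H1 : ∀ c : Fin n, ∑ e ∈ Finset.range N, D c.val e = q)
    (H2 : ∀ e, e < N → ∃ c : Fin s → Fin n, Function.Injective c ∧
      (∀ j, D (c j).val e = σ j) ∧ ∀ i : Fin n, (∀ j, i ≠ c j) → D i.val e = 0) :
    ∃ M : Finset (Finset (Fin n × Fin q)),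
      isMatching σ M ∧ M.card * r = n * q ∧ ∀ v : Fin n × Fin q, ∃ E ∈ M, v ∈ E := by
  classical
  set off : ℕ → ℕ → ℕ := fun c e => ∑ e' ∈ Finset.range e, D c e' with hoff
  set Ed : ℕ → Finset (Fin n × Fin q) := fun e =>
    Finset.univ.filter (fun v =>
      off v.1.val e ≤ v.2.val ∧ v.2.val < off v.1.val e + D v.1.val e) with hEd
  have hmem : ∀ e (v : Fin n × Fin q), v ∈ Ed e ↔
      (off v.1.val e ≤ v.2.val ∧ v.2.val < off v.1.val e + D v.1.val e) := by
    intro e v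
    simp [hEd]
  -- counts
  have hcount : ∀ e, e < N → ∀ i : Fin n,
      ((Ed e).filter (fun v => v.1 = i)).card = D i.val e := by
    intro e he i
    have hle : off i.val e + D i.val e ≤ q := by
      have h1 : off i.val e + D i.val e = ∑ e' ∈ Finset.range (e+1), D i.val e' :=
        (Finset.sum_range_succ _ e).symm
      have h2 : (∑ e' ∈ Finset.range (e+1), D i.val e') ≤ ∑ e' ∈ Finset.range N, D i.val e' :=
        Finset.sum_le_sum_of_subset (Finset.range_subset_range.2 (by omega))
      rw [h1, H1 i] at * 
      omega
    have hmain : ((Ed e).filter (fun v => v.1 = i)).card = (Finset.range (D i.val e)).card := by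
      apply Finset.card_bij' (fun v _ => v.2.val - off i.val e)
        (fun z hz => (i, ⟨off i.val e + z, by
          rw [Finset.mem_range] at hz; omega⟩))
      case hi =>
        intro v hv
        rw [Finset.mem_filter] at hv
        obtain ⟨hv1, hv2⟩ := hv
        rw [hmem] at hv1
        rw [Finset.mem_range]
        rw [hv2] at hv1
        omega
      case hj =>
        intro z hz
        rw [Finset.mem_range] at hz
        rw [Finset.mem_filter]
        refine ⟨(hmem _ _).2 ⟨?_, ?_⟩, rfl⟩
        · show off i.val e ≤ off i.val e + z
          omega
        · show off i.val e + z < off i.val e + D i.val e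
          omega
      case left_inv =>
        intro v hv
        rw [Finset.mem_filter] at hv
        obtain ⟨hv1, hv2⟩ := hv
        rw [hmem] at hv1
        rw [hv2] at hv1
        apply Prod.ext
        · exact hv2.symm
        · apply Fin.ext
          show off i.val e + (v.2.val - off i.val e) = v.2.val
          omega
      case right_inv =>
        intro z hz
        rw [Finset.mem_range] at hz
        show off i.val e + z - off i.val e = z
        omega
    rw [hmain, Finset.card_range]
  -- each is an edge
  have hedge : ∀ e, e < N → isEdge σ (Ed e) := by
    intro e he
    obtain ⟨c, hc, hval, hz⟩ := H2 e he
    apply pm_key σ hpos (Ed e) c hc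
    · intro j
      rw [hcount e he (c j), hval j]
    · intro i hi
      rw [hcount e he i]
      exact hz i hi
  -- disjointness
  have hdisj : ∀ e, e < N → ∀ e', e' < N → e ≠ e' → Disjoint (Ed e) (Ed e') := by
    have base : ∀ e e', e < e' → Disjoint (Ed e) (Ed e') := by
      intro e e' hlt
      rw [Finset.disjoint_left]
      intro v hv hv'
      rw [hmem] at hv hv'
      have hmono := pm_off_mono (D v.1.val) e e' hlt
      have h1 : off v.1.val e = ∑ e'' ∈ Finset.range e, D v.1.val e'' := rfl
      have h2 : off v.1.val e' = ∑ e'' ∈ Finset.range e', D v.1.val e'' := rfl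
      omega
    intro e _ e' _ hne
    rcases Nat.lt_or_ge e e' with h | h
    · exact base e e' h
    · exact (base e' e (by omega)).symm
  -- covering
  have hcov : ∀ v : Fin n × Fin q, ∃ e, e < N ∧ v ∈ Ed e := by
    intro v
    have hρ : v.2.val < ∑ e ∈ Finset.range N, D v.1.val e := by
      rw [H1 v.1]; exact v.2.isLt
    obtain ⟨e, he, h1, h2⟩ := pm_interval_ex (D v.1.val) N v.2.val hρ
    exact ⟨e, he, (hmem e v).2 ⟨h1, h2⟩⟩
  refine ⟨(Finset.range N).image Ed, ⟨?_, ?_⟩, ?_, ?_⟩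
  · intro E hE
    rw [Finset.mem_image] at hE
    obtain ⟨e, he, rfl⟩ := hE
    exact hedge e (Finset.mem_range.1 he)
  · intro E hE F hF hne
    rw [Finset.mem_image] at hE hF
    obtain ⟨e, he, rfl⟩ := hE
    obtain ⟨e', he', rfl⟩ := hF
    have : e ≠ e' := fun h => hne (by rw [h])
    exact hdisj e (Finset.mem_range.1 he) e' (Finset.mem_range.1 he') this
  · -- cardinality
    set M := (Finset.range N).image Ed with hM
    have hdisjM : ∀ x ∈ M, ∀ y ∈ M, x ≠ y → Disjoint (id x) (id y) := by
      intro E hE F hF hne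
      rw [hM, Finset.mem_image] at hE hF
      obtain ⟨e, he, rfl⟩ := hE
      obtain ⟨e', he', rfl⟩ := hF
      have : e ≠ e' := fun h => hne (by rw [h])
      exact hdisj e (Finset.mem_range.1 he) e' (Finset.mem_range.1 he') this
    have hU : M.biUnion id = Finset.univ := by
      apply Finset.eq_univ_of_forall
      intro v
      rw [Finset.mem_biUnion]
      obtain ⟨e, he, hv⟩ := hcov v
      exact ⟨Ed e, Finset.mem_image_of_mem Ed (Finset.mem_range.2 he), hv⟩
    have h1 : (M.biUnion id).card = ∑ E ∈ M, E.card := Finset.card_biUnion hdisjM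
    have h2 : ∑ E ∈ M, E.card = ∑ E ∈ M, r := by
      apply Finset.sum_congr rfl
      intro E hE
      rw [hM, Finset.mem_image] at hE
      obtain ⟨e, he, rfl⟩ := hE
      exact pm_card σ hsum (Ed e) (hedge e (Finset.mem_range.1 he))
    have h3 : (M.biUnion id).card = n * q := by
      rw [hU, Finset.card_univ]
      simp [Fintype.card_prod]
    rw [← h3, h1, h2, Finset.sum_const, smul_eq_mul]
  · intro v
    obtain ⟨e, he, hv⟩ := hcov v
    exact ⟨Ed e, Finset.mem_image_of_mem Ed (Finset.mem_range.2 he), hv⟩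

lemma pm_frob (L r q : ℕ) (hr : 0 < r) (hL : 0 < L) (hco : Nat.Coprime L r)
    (hq : (L - 1) * (r - 1) ≤ q) : ∃ x y, q = x * L + y * r := by
  haveI : NeZero r := ⟨hr.ne'⟩
  set x : ℕ := ((q : ZMod r) * (L : ZMod r)⁻¹).val with hx
  have hxr : x < r := ZMod.val_lt _
  have hunit : IsUnit (L : ZMod r) := (ZMod.isUnit_iff_coprime L r).2 hco
  have hcast : ((x * L : ℕ) : ZMod r) = ((q : ℕ) : ZMod r) := by
    push_cast
    rw [hx]
    rw [ZMod.natCast_val]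
    push_cast
    rw [ZMod.cast_id]
    rw [mul_assoc, ZMod.inv_mul_of_unit _ hunit, mul_one]
  have hmodeq : x * L ≡ q [MOD r] := (ZMod.natCast_eq_natCast_iff _ _ _).1 hcast
  have hxLle : x * L ≤ q := by
    by_contra hcon
    push_neg at hcon
    have h1 : r ∣ x * L - q := (Nat.modEq_iff_dvd' (le_of_lt hcon)).1 hmodeq.symm
    have h2 : x * L ≤ (r - 1) * L := Nat.mul_le_mul_right L (by omega)
    have h3 : (r - 1) * L = (L - 1) * (r - 1) + (r - 1) := by
      cases L with
      | zero => omega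
      | succ L' => cases r with
        | zero => omega
        | succ r' =>
            simp only [Nat.add_sub_cancel]
            ring
    have h4 : x * L - q < r := by omega
    have h5 : 0 < x * L - q := by omega
    have := Nat.le_of_dvd h5 h1
    omega
  have h6 : r ∣ q - x * L := (Nat.modEq_iff_dvd' hxLle).1 hmodeq
  obtain ⟨y, hy⟩ := h6
  refine ⟨x, y, ?_⟩
  rw [Nat.mul_comm y r]
  omega

theorem stmt_12 (n r q s a b L : ℕ) (σ : Fin s → ℕ) (A : Finset (Fin s))
    (hs : 1 ≤ s)
    (hpos : ∀ i, 1 ≤ σ i)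
    (hmono : ∀ i j : Fin s, i ≤ j → σ j ≤ σ i)
    (hsum : ∑ i, σ i = r)
    (ha : a = ∑ j ∈ A, σ j)
    (hgood : Nat.gcd a r = 1)
    (hb : b = r - a)
    (hL : L = Nat.lcm a b)
    (hrn : r ∣ n) (hq : (L - 1) * (r - 1) ≤ q) :
    ∃ M : Finset (Finset (Fin n × Fin q)),
      isMatching σ M ∧
      M.card * r = n * q ∧
      ∀ v : Fin n × Fin q, ∃ E ∈ M, v ∈ E := by
  classical
  -- basic facts
  have hsr : s ≤ r := by
    have h1 : (Finset.univ : Finset (Fin s)).card • 1 ≤ ∑ i, σ i :=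
      Finset.card_nsmul_le_sum _ _ _ (fun i _ => hpos i)
    simpa [hsum] using h1
  have hr : 0 < r := by omega
  have har : a ≤ r := by
    rw [ha, ← hsum]
    exact Finset.sum_le_sum_of_subset (Finset.subset_univ A)
  have hbB : ∑ j ∈ Aᶜ, σ j = b := by
    have := Finset.sum_add_sum_compl A σ
    omega
  have hkAa : A.card ≤ a := by
    have h1 : A.card • 1 ≤ ∑ j ∈ A, σ j :=
      Finset.card_nsmul_le_sum _ _ _ (fun i _ => hpos i)
    simpa [ha] using h1
  have hkBb : Aᶜ.card ≤ b := by
    have h1 : Aᶜ.card • 1 ≤ ∑ j ∈ Aᶜ, σ j :=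
      Finset.card_nsmul_le_sum _ _ _ (fun i _ => hpos i)
    simpa [hbB] using h1
  have habr : a + b = r := by omega
  -- column block count
  obtain ⟨K, hn⟩ := hrn
  have hgK : ∀ c : Fin n, c.val / r < K := by
    intro c
    apply Nat.div_lt_of_lt_mul
    exact lt_of_lt_of_eq c.isLt (by rw [hn, Nat.mul_comm r K])
  -- Frobenius decomposition  q = x*(a*b) + y*r
  obtain ⟨x, y, hxy⟩ : ∃ x y, q = x * (a * b) + y * r := by
    rcases Nat.eq_zero_or_pos (a * b) with hab | hab
    · -- then r = 1
      have hr1 : r = 1 := by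
        rcases Nat.mul_eq_zero.1 hab with h0 | h0
        · rw [h0] at hgood
          simpa using hgood
        · have : a = r := by omega
          rw [this] at hgood
          simpa using hgood
      exact ⟨0, q, by simp [hr1, hab]⟩
    · have hapos : 0 < a := by
        rcases Nat.eq_zero_or_pos a with h0 | h0
        · rw [h0, Nat.zero_mul] at hab; omega
        · exact h0
      have hbpos : 0 < b := by
        rcases Nat.eq_zero_or_pos b with h0 | h0
        · rw [h0, Nat.mul_zero] at hab; omega
        · exact h0
      have hcoab : Nat.Coprime a b := by
        unfold Nat.Coprime
        rw [hb, Nat.gcd_sub_self_right har]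
        exact hgood
      have hcobr : Nat.gcd b r = 1 := by
        have h1 : Nat.gcd b r = Nat.gcd b (a + b) := by rw [habr]
        rw [h1, Nat.gcd_add_self_right]
        exact (Nat.coprime_comm.1 hcoab)
      have hLab : L = a * b := by rw [hL, Nat.Coprime.lcm_eq_mul hcoab]
      have hco : Nat.Coprime (a * b) r := Nat.Coprime.mul hgood hcobr
      rw [hLab] at hq
      exact pm_frob (a * b) r q hr (Nat.mul_pos hapos hbpos) hco hq
  -- the enumerations of A and its complement
  set isoA := A.orderIsoOfFin rfl with hisoA
  set isoB := Aᶜ.orderIsoOfFin rfl with hisoB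
  set fA : ℕ → ℕ := fun m => if h : m < A.card then σ ((isoA ⟨m, h⟩ : {x // x ∈ A}) : Fin s) else 0 with hfA
  set fB : ℕ → ℕ := fun m => if h : m < Aᶜ.card then σ ((isoB ⟨m, h⟩ : {x // x ∈ Aᶜ}) : Fin s) else 0 with hfB
  set fR : ℕ → ℕ := fun m => if h : m < s then σ ⟨m, h⟩ else 0 with hfR
  have SfA : ∑ j ∈ Finset.range A.card, fA j = a := by
    rw [Finset.sum_range]
    have h2 : ∑ m : Fin A.card, fA m.val = ∑ z : {x // x ∈ A}, σ (z : Fin s) := by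
      apply Fintype.sum_equiv isoA.toEquiv
      intro m
      rw [hfA]
      simp only [m.isLt, dif_pos, Fin.eta]
      rfl
    rw [h2, Finset.sum_coe_sort A (fun j => σ j)]
    omega
  have SfB : ∑ j ∈ Finset.range Aᶜ.card, fB j = b := by
    rw [Finset.sum_range]
    have h2 : ∑ m : Fin Aᶜ.card, fB m.val = ∑ z : {x // x ∈ Aᶜ}, σ (z : Fin s) := by
      apply Fintype.sum_equiv isoB.toEquiv
      intro m
      rw [hfB]
      simp only [m.isLt, dif_pos, Fin.eta]
      rfl
    rw [h2, Finset.sum_coe_sort Aᶜ (fun j => σ j)]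
    omega
  have SfR : ∑ j ∈ Finset.range s, fR j = r := by
    rw [Finset.sum_range]
    have h1 : ∀ m : Fin s, fR m.val = σ m := by
      intro m
      rw [hfR]
      simp only [m.isLt, dif_pos, Fin.eta]
    rw [Finset.sum_congr rfl (fun m _ => h1 m)]
    exact hsum
  -- the demand function per column-in-group / edge-in-group
  set Dcol : ℕ → ℕ → ℕ := fun w l =>
    if l < x * (a * b) then
      (if w < a then
        (if (w + a - l % a) % a < A.card then fA ((w + a - l % a) % a) else 0)
       else
        (if (w - a + b - l % b) % b < Aᶜ.card then fB ((w - a + b - l % b) % b) else 0))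
    else
      (if (w + r - (l - x * (a * b)) % r) % r < s then fR ((w + r - (l - x * (a * b)) % r) % r) else 0)
    with hDcol
  refine pm_gen n q r s σ hpos hsum (K * q)
    (fun c e => if e / q = c / r then Dcol (c % r) (e % q) else 0) ?_ ?_
  · -- H1 : column sums
    intro c
    have h0 := pm_groupsum q K (c.val / r) (hgK c) (fun l => Dcol (c.val % r) l)
    have h1 : ∑ l ∈ Finset.range q, Dcol (c.val % r) l = q := by
      have hw : c.val % r < r := Nat.mod_lt _ hr
      set w := c.val % r with hwdef
      conv_lhs => rw [hxy]
      rw [Finset.sum_range_add]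
      have p1 : ∑ l ∈ Finset.range (x * (a * b)), Dcol w l = x * (a * b) := by
        by_cases hwa : w < a
        · set GA : ℕ → ℕ := fun ρ => if (w + a - ρ) % a < A.card then fA ((w + a - ρ) % a) else 0 with hGA
          have hbody : ∀ l ∈ Finset.range (x * (a * b)), Dcol w l = GA (l % a) := by
            intro l hl
            rw [Finset.mem_range] at hl
            rw [hGA, hDcol]
            simp only
            rw [if_pos hl, if_pos hwa]
          rw [Finset.sum_congr rfl hbody, show x * (a * b) = (x * b) * a by ring]
          rw [pm_sumcyc a (x * b) GA]
          simp only [hGA]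
          rw [pm_sumshift a A.card w hkAa fA, SfA]
        · set GB : ℕ → ℕ := fun ρ => if (w - a + b - ρ) % b < Aᶜ.card then fB ((w - a + b - ρ) % b) else 0 with hGB
          have hbody : ∀ l ∈ Finset.range (x * (a * b)), Dcol w l = GB (l % b) := by
            intro l hl
            rw [Finset.mem_range] at hl
            rw [hGB, hDcol]
            simp only
            rw [if_pos hl, if_neg hwa]
          rw [Finset.sum_congr rfl hbody, show x * (a * b) = (x * a) * b by ring]
          rw [pm_sumcyc b (x * a) GB]
          simp only [hGB]
          rw [pm_sumshift b Aᶜ.card (w - a) hkBb fB, SfB]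
      have p2 : ∑ i ∈ Finset.range (y * r), Dcol w (x * (a * b) + i) = y * r := by
        set GR : ℕ → ℕ := fun ρ => if (w + r - ρ) % r < s then fR ((w + r - ρ) % r) else 0 with hGR
        have hbody : ∀ i ∈ Finset.range (y * r), Dcol w (x * (a * b) + i) = GR (i % r) := by
          intro i hi
          rw [hGR, hDcol]
          simp only
          rw [if_neg (by omega), Nat.add_sub_cancel_left]
        rw [Finset.sum_congr rfl hbody]
        rw [pm_sumcyc r y GR]
        simp only [hGR]
        rw [pm_sumshift r s w hsr fR, SfR]
      omega
    exact h0.trans h1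
  · -- H2 : each edge is a proper placement
    intro e he
    have hq0 : 0 < q := by
      rcases Nat.eq_zero_or_pos q with h0 | h0
      · rw [h0, Nat.mul_zero] at he; omega
      · exact h0
    have hgKe : e / q < K := Nat.div_lt_of_lt_mul (by rw [Nat.mul_comm]; exact he)
    have hcol : ∀ w, w < r → e / q * r + w < n := by
      intro w hw
      have h2 : (e / q + 1) * r ≤ K * r := Nat.mul_le_mul_right r (by omega)
      have h3 : (e / q + 1) * r = e / q * r + r := by ring
      have h4 : n = K * r := by rw [hn, Nat.mul_comm]
      omega
    have hdiv : ∀ w, w < r → (e / q * r + w) / r = e / q := by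
      intro w hw
      rw [show e / q * r + w = w + r * (e / q) by ring, Nat.add_mul_div_left _ _ hr,
        Nat.div_eq_of_lt hw]
      omega
    have hmodr : ∀ w, w < r → (e / q * r + w) % r = w := by
      intro w hw
      rw [show e / q * r + w = w + e / q * r by ring, Nat.add_mul_mod_self_right,
        Nat.mod_eq_of_lt hw]
    rcases Nat.lt_or_ge (e % q) (x * (a * b)) with hLl | hLl
    · -- L-type edge
      have hapos : 0 < a := by
        rcases Nat.eq_zero_or_pos a with h0 | h0
        · rw [h0, Nat.zero_mul, Nat.mul_zero] at hLl; omega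
        · exact h0
      have hbpos : 0 < b := by
        rcases Nat.eq_zero_or_pos b with h0 | h0
        · rw [h0, Nat.mul_zero, Nat.mul_zero] at hLl; omega
        · exact h0
      set vc : Fin s → ℕ := fun j =>
        if hj : j ∈ A then e / q * r + (e % q + ((isoA.symm ⟨j, hj⟩ : Fin A.card) : ℕ)) % a
        else e / q * r + a + (e % q + ((isoB.symm ⟨j, Finset.mem_compl.2 hj⟩ : Fin Aᶜ.card) : ℕ)) % b
        with hvc
      have hvcA : ∀ j (hj : j ∈ A),
          vc j = e / q * r + (e % q + ((isoA.symm ⟨j, hj⟩ : Fin A.card) : ℕ)) % a := by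
        intro j hj
        rw [hvc]
        simp only [dif_pos hj]
      have hvcB : ∀ j (hj : ¬ j ∈ A),
          vc j = e / q * r + a + (e % q + ((isoB.symm ⟨j, Finset.mem_compl.2 hj⟩ : Fin Aᶜ.card) : ℕ)) % b := by
        intro j hj
        rw [hvc]
        simp only [dif_neg hj]
      have hwA : ∀ u : ℕ, (e % q + u) % a < a := fun u => Nat.mod_lt _ hapos
      have hwB : ∀ u : ℕ, (e % q + u) % b < b := fun u => Nat.mod_lt _ hbpos
      have hvcn : ∀ j, vc j < n := by
        intro j
        by_cases hj : j ∈ A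
        · rw [hvcA j hj]
          exact hcol _ (by have := hwA ((isoA.symm ⟨j, hj⟩ : Fin A.card) : ℕ); omega)
        · rw [hvcB j hj]
          have h1 := hwB ((isoB.symm ⟨j, Finset.mem_compl.2 hj⟩ : Fin Aᶜ.card) : ℕ)
          have h2 : a + (e % q + ((isoB.symm ⟨j, Finset.mem_compl.2 hj⟩ : Fin Aᶜ.card) : ℕ)) % b < r := by omega
          have := hcol _ h2
          omega
      refine ⟨fun j => ⟨vc j, hvcn j⟩, ?_, ?_, ?_⟩
      · -- injectivity
        intro j j' hjj
        have hveq : vc j = vc j' := congrArg Fin.val hjj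
        by_cases hj : j ∈ A <;> by_cases hj' : j' ∈ A
        · rw [hvcA j hj, hvcA j' hj'] at hveq
          set u := ((isoA.symm ⟨j, hj⟩ : Fin A.card) : ℕ) with hu
          set u' := ((isoA.symm ⟨j', hj'⟩ : Fin A.card) : ℕ) with hu'
          have hul : u < a := lt_of_lt_of_le (Fin.isLt _) hkAa
          have hul' : u' < a := lt_of_lt_of_le (Fin.isLt _) hkAa
          have e1 := pm_mod1 a (e % q) u hul
          have e2 := pm_mod1 a (e % q) u' hul'
          have hmm : (e % q + u) % a = (e % q + u') % a := by omega
          rw [hmm] at e1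
          have huu : u = u' := by omega
          have : (⟨j, hj⟩ : {z // z ∈ A}) = ⟨j', hj'⟩ := by
            have := isoA.symm.injective (Fin.ext huu : isoA.symm ⟨j, hj⟩ = isoA.symm ⟨j', hj'⟩)
            exact this
          exact congrArg Subtype.val this
        · rw [hvcA j hj, hvcB j' hj'] at hveq
          have := hwA ((isoA.symm ⟨j, hj⟩ : Fin A.card) : ℕ)
          omega
        · rw [hvcB j hj, hvcA j' hj'] at hveq
          have := hwA ((isoA.symm ⟨j', hj'⟩ : Fin A.card) : ℕ)
          omega
        · rw [hvcB j hj, hvcB j' hj'] at hveq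
          set u := ((isoB.symm ⟨j, Finset.mem_compl.2 hj⟩ : Fin Aᶜ.card) : ℕ) with hu
          set u' := ((isoB.symm ⟨j', Finset.mem_compl.2 hj'⟩ : Fin Aᶜ.card) : ℕ) with hu'
          have hul : u < b := lt_of_lt_of_le (Fin.isLt _) hkBb
          have hul' : u' < b := lt_of_lt_of_le (Fin.isLt _) hkBb
          have e1 := pm_mod1 b (e % q) u hul
          have e2 := pm_mod1 b (e % q) u' hul'
          have hmm : (e % q + u) % b = (e % q + u') % b := by omega
          rw [hmm] at e1
          have huu : u = u' := by omega
          have : (⟨j, Finset.mem_compl.2 hj⟩ : {z // z ∈ Aᶜ}) = ⟨j', Finset.mem_compl.2 hj'⟩ := by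
            exact isoB.symm.injective (Fin.ext huu)
          exact congrArg Subtype.val this
      · -- counts
        intro j
        by_cases hj : j ∈ A
        · have hul : ((isoA.symm ⟨j, hj⟩ : Fin A.card) : ℕ) < a := lt_of_lt_of_le (Fin.isLt _) hkAa
          have hwa : (e % q + ((isoA.symm ⟨j, hj⟩ : Fin A.card) : ℕ)) % a < a := hwA _
          show (if e / q = (vc j) / r then Dcol ((vc j) % r) (e % q) else 0) = σ j
          rw [hvcA j hj, hdiv _ (by omega), hmodr _ (by omega), if_pos rfl]
          rw [hDcol]
          simp only
          rw [if_pos hLl, if_pos hwa]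
          have e1 := pm_mod1 a (e % q) ((isoA.symm ⟨j, hj⟩ : Fin A.card) : ℕ) hul
          rw [e1, if_pos (Fin.isLt _)]
          rw [hfA]
          simp only
          rw [dif_pos (Fin.isLt _)]
          rw [Fin.eta, OrderIso.apply_symm_apply]
        · have hul : ((isoB.symm ⟨j, Finset.mem_compl.2 hj⟩ : Fin Aᶜ.card) : ℕ) < b :=
            lt_of_lt_of_le (Fin.isLt _) hkBb
          have hwb : (e % q + ((isoB.symm ⟨j, Finset.mem_compl.2 hj⟩ : Fin Aᶜ.card) : ℕ)) % b < b := hwB _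
          show (if e / q = (vc j) / r then Dcol ((vc j) % r) (e % q) else 0) = σ j
          rw [hvcB j hj, show e / q * r + a + (e % q + ((isoB.symm ⟨j, Finset.mem_compl.2 hj⟩ : Fin Aᶜ.card) : ℕ)) % b
              = e / q * r + (a + (e % q + ((isoB.symm ⟨j, Finset.mem_compl.2 hj⟩ : Fin Aᶜ.card) : ℕ)) % b) by ring]
          rw [hdiv _ (by omega), hmodr _ (by omega), if_pos rfl]
          rw [hDcol]
          simp only
          rw [if_pos hLl, if_neg (by omega)]
          have e1 := pm_mod1 b (e % q) ((isoB.symm ⟨j, Finset.mem_compl.2 hj⟩ : Fin Aᶜ.card) : ℕ) hul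
          rw [show a + (e % q + ((isoB.symm ⟨j, Finset.mem_compl.2 hj⟩ : Fin Aᶜ.card) : ℕ)) % b - a
              = (e % q + ((isoB.symm ⟨j, Finset.mem_compl.2 hj⟩ : Fin Aᶜ.card) : ℕ)) % b by omega]
          rw [e1, if_pos (Fin.isLt _)]
          rw [hfB]
          simp only
          rw [dif_pos (Fin.isLt _)]
          rw [Fin.eta, OrderIso.apply_symm_apply]
      · -- zero outside
        intro i hi
        show (if e / q = i.val / r then Dcol (i.val % r) (e % q) else 0) = 0
        by_cases hc1 : e / q = i.val / r
        · rw [if_pos hc1]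
          have hwr : i.val % r < r := Nat.mod_lt _ hr
          have hival : i.val = e / q * r + i.val % r := by
            have h1 := Nat.div_add_mod i.val r
            have h2 : r * (i.val / r) = e / q * r := by rw [← hc1]; ring
            omega
          rw [hDcol]
          simp only
          rw [if_pos hLl]
          by_cases hwa : i.val % r < a
          · by_cases hguard : (i.val % r + a - (e % q) % a) % a < A.card
            · exfalso
              set z : {z // z ∈ A} := isoA ⟨(i.val % r + a - (e % q) % a) % a, hguard⟩ with hz
              apply hi (z : Fin s)
              apply Fin.ext
              show i.val = vc (z : Fin s)
              have hzA : (z : Fin s) ∈ A := z.2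
              rw [hvcA _ hzA]
              have h5 : (isoA.symm ⟨(z : Fin s), hzA⟩ : Fin A.card)
                  = ⟨(i.val % r + a - (e % q) % a) % a, hguard⟩ := by
                have : (⟨(z : Fin s), hzA⟩ : {z // z ∈ A}) = z := Subtype.ext rfl
                rw [this, hz]
                exact isoA.symm_apply_apply _
              rw [h5]
              have h6 := pm_mod2 a (e % q) (i.val % r) hwa
              rw [h6]
              exact hival
            · rw [if_pos hwa, if_neg hguard]
          · by_cases hguard : (i.val % r - a + b - (e % q) % b) % b < Aᶜ.card
            · exfalso
              set z : {z // z ∈ Aᶜ} := isoB ⟨(i.val % r - a + b - (e % q) % b) % b, hguard⟩ with hz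
              apply hi (z : Fin s)
              apply Fin.ext
              show i.val = vc (z : Fin s)
              have hzB : (z : Fin s) ∈ Aᶜ := z.2
              have hzA : ¬ (z : Fin s) ∈ A := Finset.mem_compl.1 hzB
              rw [hvcB _ hzA]
              have h5 : (isoB.symm ⟨(z : Fin s), Finset.mem_compl.2 hzA⟩ : Fin Aᶜ.card)
                  = ⟨(i.val % r - a + b - (e % q) % b) % b, hguard⟩ := by
                have : (⟨(z : Fin s), Finset.mem_compl.2 hzA⟩ : {z // z ∈ Aᶜ}) = z := Subtype.ext rfl
                rw [this, hz]
                exact isoB.symm_apply_apply _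
              rw [h5]
              have hwb : i.val % r - a < b := by omega
              have h6 := pm_mod2 b (e % q) (i.val % r - a) hwb
              rw [h6]
              omega
            · rw [if_neg hwa, if_neg hguard]
        · rw [if_neg hc1]
    · -- r-type edge
      set v' := e % q - x * (a * b) with hv'
      have hvcn : ∀ j : Fin s, e / q * r + (v' + j.val) % r < n := by
        intro j
        exact hcol _ (Nat.mod_lt _ hr)
      refine ⟨fun j => ⟨e / q * r + (v' + j.val) % r, hvcn j⟩, ?_, ?_, ?_⟩
      · intro j j' hjj
        have hveq : e / q * r + (v' + j.val) % r = e / q * r + (v' + j'.val) % r :=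
          congrArg Fin.val hjj
        have e1 := pm_mod1 r v' j.val (by omega)
        have e2 := pm_mod1 r v' j'.val (by omega)
        have hmm : (v' + j.val) % r = (v' + j'.val) % r := by omega
        rw [hmm] at e1
        exact Fin.ext (by omega)
      · intro j
        have hwr : (v' + j.val) % r < r := Nat.mod_lt _ hr
        show (if e / q = (e / q * r + (v' + j.val) % r) / r
            then Dcol ((e / q * r + (v' + j.val) % r) % r) (e % q) else 0) = σ j
        rw [hdiv _ hwr, hmodr _ hwr, if_pos rfl]
        rw [hDcol]
        simp only
        rw [if_neg (by omega)]
        rw [← hv']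
        have e1 := pm_mod1 r v' j.val (by omega)
        rw [e1, if_pos j.isLt]
        rw [hfR]
        simp only [j.isLt, dif_pos, Fin.eta]
      · intro i hi
        show (if e / q = i.val / r then Dcol (i.val % r) (e % q) else 0) = 0
        by_cases hc1 : e / q = i.val / r
        · rw [if_pos hc1]
          have hwr : i.val % r < r := Nat.mod_lt _ hr
          have hival : i.val = e / q * r + i.val % r := by
            have h1 := Nat.div_add_mod i.val r
            have h2 : r * (i.val / r) = e / q * r := by rw [← hc1]; ring
            omega
          rw [hDcol]
          simp only
          rw [if_neg (by omega)]
          rw [← hv']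
          by_cases hguard : (i.val % r + r - v' % r) % r < s
          · exfalso
            apply hi ⟨(i.val % r + r - v' % r) % r, hguard⟩
            apply Fin.ext
            show i.val = e / q * r + (v' + (i.val % r + r - v' % r) % r) % r
            have h6 := pm_mod2 r v' (i.val % r) hwr
            rw [h6]
            exact hival
          · rw [if_neg hguard]
        · rw [if_neg hc1]
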